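/- arXiv:2103.07876 — 3 statements merged into one kernel-verified Lean document; each statement's English description precedes it below -/
import Mathlib

section
/- Let A, B, C be categories, let f : B → A be a functor, and let g : B → C be a functor with a fully faithful right adjoint g_* such that the counit of the adjunction g ⊣ g_* is an isomorphism (i.e. g ∘ g_* ≅ id). Suppose A is the category of presheaves on a small category 𝔞, f = f^* is the restriction of a left Kan extension situation with f^* ∘ Y_𝔞 given. Then defining h^* := Lan_{Y_𝔞}(g_* ∘ f^* ∘ Y_𝔞), one has g^* ∘ h^* ≅ f^*, where g^* is the left adjoint of g_*; in particular presheaf categories over finitely complete small categories are injective with respect to flat embeddings. -/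
open CategoryTheory Limits

universe u

theorem stmt4 {𝔞 : Type u} [SmallCategory 𝔞] [HasFiniteLimits 𝔞]
    {B : Type (u + 1)} [Category.{u} B] {C : Type (u + 1)} [Category.{u} C]
    [HasColimits B] [HasColimits C]
    (fstar : (𝔞ᵒᵖ ⥤ Type u) ⥤ B) [PreservesColimits fstar] [PreservesFiniteLimits fstar]
    (gstar : C ⥤ B) (gs : B ⥤ C) (adj : gstar ⊣ gs) [gs.Full] [gs.Faithful]
    [PreservesFiniteLimits gstar] :
    Nonempty (yoneda.leftKanExtension (yoneda ⋙ fstar ⋙ gs) ⋙ gstar ≅ fstar) := by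
  have hg : PreservesColimits gstar := adj.leftAdjoint_preservesColimits
  set A : 𝔞 ⥤ C := yoneda ⋙ fstar ⋙ gs with hA
  set L : (𝔞ᵒᵖ ⥤ Type u) ⥤ B := yoneda.leftKanExtension A ⋙ gstar with hL
  have hc : IsIso adj.counit := adj.counit_isIso_of_R_fully_faithful
  have e : yoneda ⋙ fstar ≅ yoneda ⋙ L :=
    (Functor.rightUnitor _).symm ≪≫
      Functor.isoWhiskerLeft (yoneda ⋙ fstar) (asIso adj.counit).symm ≪≫
      (Functor.associator (yoneda ⋙ fstar) gs gstar).symm ≪≫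
      Functor.isoWhiskerRight (Functor.associator yoneda fstar gs ≪≫
        (@asIso _ _ _ _ (yoneda.leftKanExtensionUnit A) (Functor.isPointwiseLeftKanExtensionOfIsLeftKanExtension _ (yoneda.leftKanExtensionUnit A)).isIso_hom)) gstar ≪≫
      Functor.associator yoneda (yoneda.leftKanExtension A) gstar
  have hlan : PreservesColimits (yoneda.leftKanExtension A) := by
    let Ψ := Functor.leftExtensionEquivalenceOfIso₁ (uliftYonedaIsoYoneda.{u} (C := 𝔞)).symm A
    have h1 : IsInitial (Ψ.functor.obj
        (Functor.LeftExtension.mk _ (yoneda.leftKanExtensionUnit A))) :=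
      IsInitial.isInitialObj Ψ.functor _ (Functor.isUniversalOfIsLeftKanExtension _ _)
    have h2 : IsInitial (Functor.LeftExtension.mk _
        (uliftYoneda.{u}.leftKanExtensionUnit A)) :=
      Functor.isUniversalOfIsLeftKanExtension _ _
    have i : uliftYoneda.{u}.leftKanExtension A ≅ yoneda.leftKanExtension A :=
      (StructuredArrow.proj A ((Functor.whiskeringLeft _ _ _).obj uliftYoneda.{u})).mapIso
        (h2.uniqueUpToIso h1)
    have : PreservesColimits (uliftYoneda.{u}.leftKanExtension A) :=
      Presheaf.preservesColimitsOfSize_leftKanExtension (A := A)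
    exact preservesColimits_of_natIso i
  have hLp : PreservesColimits L := comp_preservesColimits _ _
  exact ⟨Presheaf.uniqueExtensionAlongULiftYoneda (A := uliftYoneda.{u} ⋙ fstar) L
      (Functor.isoWhiskerRight uliftYonedaIsoYoneda fstar ≪≫ e ≪≫
        Functor.isoWhiskerRight uliftYonedaIsoYoneda.symm L) ≪≫
    (Presheaf.uniqueExtensionAlongULiftYoneda fstar (Iso.refl _)).symm⟩
end

section
/- Every retract of a finitely accessible category (in the 2-category of categories with filtered colimits and filtered-colimit-preserving functors) is a continuous category: if r : K → A and s : A → K preserve filtered colimits with r ∘ s ≅ id_A and K is finitely accessible, then the colimit functor colim : Ind(A) → A has a left adjoint. -/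
open CategoryTheory Limits Opposite

universe v u u₂

set_option linter.unusedSectionVars false
set_option maxHeartbeats 1000000

namespace Stmt16Aux


section Compact

variable {B : Type u₂} [Category.{v} B]

/-- Hom out of `Ind.yoneda.obj b` is, via the inclusion into presheaves, corepresented by
`yoneda.obj b`. -/
noncomputable def indCoyonedaIso (b : B) :
    coyoneda.obj (op (Ind.yoneda.obj b)) ⋙ uliftFunctor.{u₂} ≅
      Ind.inclusion B ⋙ coyoneda.obj (op (yoneda.obj b)) :=
  NatIso.ofComponents
    (fun W => Equiv.toIso
      (Equiv.ulift.trans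
        (((Ind.inclusion.fullyFaithful (C := B)).homEquiv).trans
          (Iso.homCongr ((Ind.yonedaCompInclusion (C := B)).app b) (Iso.refl _)))))
    (by
      intro W W' f
      ext ⟨g⟩
      change _ ≫ (Ind.inclusion B).map (g ≫ f) = (_ ≫ (Ind.inclusion B).map g) ≫ _
      simp)

noncomputable instance indYonedaPreservesColimit (b : B) {E : Type v} [SmallCategory E]
    [IsFiltered E] (H : E ⥤ Ind B) :
    PreservesColimit H (coyoneda.obj (op (Ind.yoneda.obj b))) := by
  have : PreservesColimit H (coyoneda.obj (op (Ind.yoneda.obj b)) ⋙ uliftFunctor.{u₂}) :=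
    preservesColimit_of_natIso H (indCoyonedaIso b).symm
  exact preservesColimit_of_reflects_of_preserves _ uliftFunctor.{u₂}

/-- Factorization of a map out of a compact object through a filtered colimit. -/
theorem ind_factor {b : B} {E : Type v} [SmallCategory E] [IsFiltered E] {H : E ⥤ Ind B}
    (t : Cocone H) (ht : IsColimit t) (f : Ind.yoneda.obj b ⟶ t.pt) :
    ∃ (e : E) (v : Ind.yoneda.obj b ⟶ H.obj e), v ≫ t.ι.app e = f := by
  obtain ⟨e, v, hv⟩ := Types.jointly_surjective_of_isColimit
    (isColimitOfPreserves (coyoneda.obj (op (Ind.yoneda.obj b))) ht) f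
  exact ⟨e, v, hv⟩

/-- Eventual equality of two factorizations through a filtered colimit. -/
theorem ind_eq {b : B} {E : Type v} [SmallCategory E] [IsFiltered E] {H : E ⥤ Ind B}
    (t : Cocone H) (ht : IsColimit t) {e₁ e₂ : E} (v₁ : Ind.yoneda.obj b ⟶ H.obj e₁)
    (v₂ : Ind.yoneda.obj b ⟶ H.obj e₂) (h : v₁ ≫ t.ι.app e₁ = v₂ ≫ t.ι.app e₂) :
    ∃ (e₃ : E) (α : e₁ ⟶ e₃) (β : e₂ ⟶ e₃), v₁ ≫ H.map α = v₂ ≫ H.map β := by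
  have := (Types.FilteredColimit.isColimit_eq_iff
    (H ⋙ coyoneda.obj (op (Ind.yoneda.obj b)))
    (isColimitOfPreserves (coyoneda.obj (op (Ind.yoneda.obj b))) ht)
    (xi := v₁) (xj := v₂)).mp h
  obtain ⟨e₃, α, β, hh⟩ := this
  exact ⟨e₃, α, β, hh⟩

end Compact



section ColimAIso

variable {A : Type u} [Category.{v} A] [HasFilteredColimits A]
variable (colimA : Ind A ⥤ A) (adj : colimA ⊣ Ind.yoneda)

/-- For a filtered diagram `H` in `A`, the value of `colimA` on the formal colimit of `H`
is the actual colimit of `H`. -/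
noncomputable def colimAIso {E : Type v} [SmallCategory E] [IsFiltered E] (H : E ⥤ A) :
    colimA.obj (colimit (H ⋙ Ind.yoneda)) ≅ colimit H :=
  letI : PreservesColimitsOfSize.{v, v} colimA := adj.leftAdjoint_preservesColimits
  preservesColimitIso colimA (H ⋙ Ind.yoneda) ≪≫
    HasColimit.isoOfNatIso
      (Functor.associator H Ind.yoneda colimA ≪≫ Functor.isoWhiskerLeft H (asIso adj.counit) ≪≫
        H.rightUnitor)

lemma colimAIso_ι {E : Type v} [SmallCategory E] [IsFiltered E] (H : E ⥤ A) (e : E) :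
    colimA.map (colimit.ι (H ⋙ Ind.yoneda) e) ≫ (colimAIso colimA adj H).hom =
      adj.counit.app (H.obj e) ≫ colimit.ι H e := by
  letI : PreservesColimitsOfSize.{v, v} colimA := adj.leftAdjoint_preservesColimits
  simp [colimAIso]

end ColimAIso



section Main

variable {C : Type v} [SmallCategory C] {A : Type u} [Category.{v} A] [HasFilteredColimits A]

/-- The index category for the left adjoint: a "fattened" version of the index category of the
presentation of `s.obj a`. -/
structure Jc (r : Ind C ⥤ A) (s : A ⥤ Ind C) (ρ : s ⋙ r ≅ 𝟭 A) (a : A) : Type v where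
  i : (s.obj a).presentation.I

variable (r : Ind C ⥤ A) (s : A ⥤ Ind C)
variable [PreservesFilteredColimits r] [PreservesFilteredColimits s]
variable (ρ : s ⋙ r ≅ 𝟭 A) (a : A)

/-- The presentation diagram of `s.obj a` in `Ind C`. -/
noncomputable abbrev PFY : (s.obj a).presentation.I ⥤ Ind C :=
  (s.obj a).presentation.F ⋙ Ind.yoneda

/-- The presentation diagram, pushed down to `A`. -/
noncomputable abbrev DF : (s.obj a).presentation.I ⥤ A := PFY s a ⋙ r

/-- The canonical presentation of `s.obj a`. -/
noncomputable def pres : colimit (PFY s a) ≅ s.obj a :=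
  Ind.colimitPresentationCompYoneda (s.obj a)

/-- The canonical cocone maps `DF.obj i ⟶ a`. -/
noncomputable def lam (i : (s.obj a).presentation.I) : (DF r s a).obj i ⟶ a :=
  r.map (colimit.ι (PFY s a) i ≫ (pres s a).hom) ≫ ρ.hom.app a

lemma rho_nat {x y : A} (h : x ⟶ y) :
    ρ.hom.app x ≫ h = r.map (s.map h) ≫ ρ.hom.app y := by
  simpa using (ρ.hom.naturality h).symm

/-- Key computation: `gam` interacts well with postcomposition. -/
lemma rho_nat_assoc {x y : A} (h : x ⟶ y) {Z : A} (k : y ⟶ Z) :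
    ρ.hom.app x ≫ h ≫ k = r.map (s.map h) ≫ ρ.hom.app y ≫ k := by
  rw [← Category.assoc, rho_nat, Category.assoc]

lemma gam_comp {Z : Ind C} {b b' : A} (χ : Z ⟶ s.obj b) (h : b ⟶ b') :
    r.map (χ ≫ s.map h) ≫ ρ.hom.app b' = (r.map χ ≫ ρ.hom.app b) ≫ h := by
  rw [Functor.map_comp, Category.assoc, Category.assoc, ← rho_nat]

lemma lam_w {i i' : (s.obj a).presentation.I} (α : i ⟶ i') :
    (DF r s a).map α ≫ lam r s ρ a i' = lam r s ρ a i := by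
  have : (DF r s a).map α = r.map ((PFY s a).map α) := rfl
  rw [this, lam, lam, ← Functor.map_comp_assoc, colimit.w_assoc]

/-- The condition on a `K`-level morphism to be a "wavy arrow" relative to the canonical
presentation. -/
def Wc {i i' : (s.obj a).presentation.I}
    (χ : (PFY s a).obj i ⟶ s.obj ((DF r s a).obj i')) : Prop :=
  χ ≫ s.map (lam r s ρ a i') = colimit.ι (PFY s a) i ≫ (pres s a).hom

/-- Push a wavy arrow down to `A`. -/
noncomputable def gam {i i' : (s.obj a).presentation.I}
    (χ : (PFY s a).obj i ⟶ s.obj ((DF r s a).obj i')) : (DF r s a).obj i ⟶ (DF r s a).obj i' :=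
  r.map χ ≫ ρ.hom.app _

lemma gam_cocone {i i' : (s.obj a).presentation.I}
    {χ : (PFY s a).obj i ⟶ s.obj ((DF r s a).obj i')} (hχ : Wc r s ρ a χ) :
    gam r s ρ a χ ≫ lam r s ρ a i' = lam r s ρ a i := by
  rw [gam, Category.assoc, ← Category.assoc, ← gam_comp, hχ, lam, Functor.map_comp]

lemma wc_comp_lam {i i' i'' : (s.obj a).presentation.I}
    {χ : (PFY s a).obj i ⟶ s.obj ((DF r s a).obj i')} (hχ : Wc r s ρ a χ)
    {h : (DF r s a).obj i' ⟶ (DF r s a).obj i''} (hh : h ≫ lam r s ρ a i'' = lam r s ρ a i') :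
    Wc r s ρ a (χ ≫ s.map h) := by
  rw [Wc, Category.assoc, ← Functor.map_comp, hh, hχ]

lemma gam_comp_hom {i i' i'' : (s.obj a).presentation.I}
    (χ : (PFY s a).obj i ⟶ s.obj ((DF r s a).obj i'))
    (h : (DF r s a).obj i' ⟶ (DF r s a).obj i'') :
    gam r s ρ a (χ ≫ s.map h) = gam r s ρ a χ ≫ h := by
  rw [gam, gam, gam_comp, Category.assoc]

lemma wc_pfy_comp {i i' i'' : (s.obj a).presentation.I} (α : i ⟶ i')
    {χ : (PFY s a).obj i' ⟶ s.obj ((DF r s a).obj i'')} (hχ : Wc r s ρ a χ) :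
    Wc r s ρ a ((PFY s a).map α ≫ χ) := by
  rw [Wc, Category.assoc, hχ, colimit.w_assoc]

lemma gam_pfy_comp {i i' i'' : (s.obj a).presentation.I} (α : i ⟶ i')
    (χ : (PFY s a).obj i' ⟶ s.obj ((DF r s a).obj i'')) :
    gam r s ρ a ((PFY s a).map α ≫ χ) = (DF r s a).map α ≫ gam r s ρ a χ := by
  rw [gam, gam, Functor.map_comp, Category.assoc]
  rfl

/-- The fattened class of morphisms. -/
def isJ {i i' : (s.obj a).presentation.I} (g : (DF r s a).obj i ⟶ (DF r s a).obj i') : Prop :=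
  (∃ α : i ⟶ i', g = (DF r s a).map α) ∨
    (∃ χ : (PFY s a).obj i ⟶ s.obj ((DF r s a).obj i'), Wc r s ρ a χ ∧ g = gam r s ρ a χ)

lemma isJ_lam {i i' : (s.obj a).presentation.I} {g : (DF r s a).obj i ⟶ (DF r s a).obj i'}
    (hg : isJ r s ρ a g) : g ≫ lam r s ρ a i' = lam r s ρ a i := by
  rcases hg with ⟨α, rfl⟩ | ⟨χ, hχ, rfl⟩
  · exact lam_w r s ρ a α
  · exact gam_cocone r s ρ a hχ

lemma isJ_comp {i i' i'' : (s.obj a).presentation.I}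
    {g : (DF r s a).obj i ⟶ (DF r s a).obj i'} {g' : (DF r s a).obj i' ⟶ (DF r s a).obj i''}
    (hg : isJ r s ρ a g) (hg' : isJ r s ρ a g') : isJ r s ρ a (g ≫ g') := by
  rcases hg with ⟨α, rfl⟩ | ⟨χ, hχ, rfl⟩
  · rcases hg' with ⟨α', rfl⟩ | ⟨χ', hχ', rfl⟩
    · exact Or.inl ⟨α ≫ α', by rw [Functor.map_comp]⟩
    · exact Or.inr ⟨(PFY s a).map α ≫ χ', wc_pfy_comp r s ρ a α hχ',
        by rw [gam_pfy_comp]⟩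
  · refine Or.inr ⟨χ ≫ s.map g', wc_comp_lam r s ρ a hχ (isJ_lam r s ρ a hg'), ?_⟩
    rw [gam_comp_hom]

noncomputable instance : SmallCategory (Jc r s ρ a) where
  Hom j j' := {g : (DF r s a).obj j.i ⟶ (DF r s a).obj j'.i // isJ r s ρ a g}
  id j := ⟨𝟙 _, Or.inl ⟨𝟙 j.i, ((DF r s a).map_id j.i).symm⟩⟩
  comp g g' := ⟨g.1 ≫ g'.1, isJ_comp r s ρ a g.2 g'.2⟩
  id_comp _ := Subtype.ext (Category.id_comp _)
  comp_id _ := Subtype.ext (Category.comp_id _)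
  assoc _ _ _ := Subtype.ext (Category.assoc _ _ _)

/-- The diagram over the fattened index category. -/
noncomputable abbrev DJ : Jc r s ρ a ⥤ A where
  obj j := (DF r s a).obj j.i
  map g := g.1
  map_id _ := rfl
  map_comp _ _ := rfl

/-- The inclusion of the original index category into the fattened one. -/
noncomputable def inclIJ : (s.obj a).presentation.I ⥤ Jc r s ρ a where
  obj i := ⟨i⟩
  map α := ⟨(DF r s a).map α, Or.inl ⟨α, rfl⟩⟩
  map_id i := Subtype.ext ((DF r s a).map_id i)
  map_comp f g := Subtype.ext ((DF r s a).map_comp f g)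

/-- The cocone with point `a` over `DF`. -/
noncomputable def lamConeI : Cocone (DF r s a) where
  pt := a
  ι :=
    { app := lam r s ρ a
      naturality := fun _ _ α => by simpa using lam_w r s ρ a α }

/-- `a` is the colimit of `DF`. -/
noncomputable def lamConeIIsColimit : IsColimit (lamConeI r s ρ a) :=
  (isColimitOfPreserves r (colimit.isColimit (PFY s a))).ofIsoColimit
    (Cocones.ext (r.mapIso (pres s a) ≪≫ ρ.app a)
      (fun i => by simp [lam, lamConeI]))

/-- The cocone with point `a` over `DJ`. -/
noncomputable abbrev lamCocone : Cocone (DJ r s ρ a) where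
  pt := a
  ι :=
    { app := fun j => lam r s ρ a j.i
      naturality := fun _ _ g => by simpa using isJ_lam r s ρ a g.2 }

/-- Restriction of a cocone over `DJ` to `DF`. -/
noncomputable def restrCocone (c : Cocone (DJ r s ρ a)) : Cocone (DF r s a) where
  pt := c.pt
  ι :=
    { app := fun i => c.ι.app ⟨i⟩
      naturality := fun i i' α => by
        exact
          c.ι.naturality ((inclIJ r s ρ a).map α) }

/-- `a` is the colimit of `DJ`. -/
noncomputable def lamColimit : IsColimit (lamCocone r s ρ a) where
  desc c := (lamConeIIsColimit r s ρ a).desc (restrCocone r s ρ a c)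
  fac c j := by
    have := (lamConeIIsColimit r s ρ a).fac (restrCocone r s ρ a c) j.i
    simpa [lamConeI, lamCocone, restrCocone] using this
  uniq c m w := (lamConeIIsColimit r s ρ a).uniq (restrCocone r s ρ a c) m
    (fun i => by simpa [lamConeI, lamCocone, restrCocone] using w ⟨i⟩)

instance : Nonempty (Jc r s ρ a) := ⟨⟨Classical.choice IsFiltered.nonempty⟩⟩

/-- Interpolation: every object of the index category admits a wavy arrow onward. -/
lemma exists_W (i' : (s.obj a).presentation.I) :
    ∃ (i₂ : (s.obj a).presentation.I) (ψ : (PFY s a).obj i' ⟶ s.obj ((DF r s a).obj i₂)),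
      Wc r s ρ a ψ := by
  obtain ⟨i₂, ψ, hψ⟩ := ind_factor (s.mapCocone (lamConeI r s ρ a))
    (isColimitOfPreserves s (lamConeIIsColimit r s ρ a))
    (colimit.ι (PFY s a) i' ≫ (pres s a).hom)
  exact ⟨i₂, ψ, hψ⟩

lemma toW {j j' : Jc r s ρ a} (g : j ⟶ j') {i₂ : (s.obj a).presentation.I}
    {ψ : (PFY s a).obj j'.i ⟶ s.obj ((DF r s a).obj i₂)} (hψ : Wc r s ρ a ψ) :
    ∃ χ : (PFY s a).obj j.i ⟶ s.obj ((DF r s a).obj i₂),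
      Wc r s ρ a χ ∧ g.1 ≫ gam r s ρ a ψ = gam r s ρ a χ := by
  rcases g.2 with ⟨α, hα⟩ | ⟨χ₀, hχ₀, hg⟩
  · exact ⟨(PFY s a).map α ≫ ψ, wc_pfy_comp r s ρ a α hψ,
      by rw [hα, gam_pfy_comp]⟩
  · refine ⟨χ₀ ≫ s.map (gam r s ρ a ψ),
      wc_comp_lam r s ρ a hχ₀ (gam_cocone r s ρ a hψ), ?_⟩
    rw [hg, gam_comp_hom]

instance : IsFiltered (Jc r s ρ a) where
  cocone_objs j j' :=
    ⟨⟨IsFiltered.max j.i j'.i⟩,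
      ⟨(DF r s a).map (IsFiltered.leftToMax j.i j'.i), Or.inl ⟨_, rfl⟩⟩,
      ⟨(DF r s a).map (IsFiltered.rightToMax j.i j'.i), Or.inl ⟨_, rfl⟩⟩, trivial⟩
  cocone_maps j j' g g' := by
    obtain ⟨i₂, ψ, hψ⟩ := exists_W r s ρ a j'.i
    obtain ⟨χ₁, hχ₁, e₁⟩ := toW r s ρ a g hψ
    obtain ⟨χ₂, hχ₂, e₂⟩ := toW r s ρ a g' hψ
    obtain ⟨i₃, α, β, h₃⟩ := ind_eq (s.mapCocone (lamConeI r s ρ a))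
      (isColimitOfPreserves s (lamConeIIsColimit r s ρ a)) χ₁ χ₂
      (by change χ₁ ≫ s.map (lam r s ρ a i₂) = χ₂ ≫ s.map (lam r s ρ a i₂)
          rw [hχ₁, hχ₂])
    set δ : i₂ ⟶ IsFiltered.coeq α β := α ≫ IsFiltered.coeqHom α β with hδ
    have h₄ : χ₁ ≫ s.map ((DF r s a).map δ) = χ₂ ≫ s.map ((DF r s a).map δ) := by
      rw [hδ, Functor.map_comp, Functor.map_comp, ← Category.assoc, ← Category.assoc]
      rw [show χ₁ ≫ s.map ((DF r s a).map α) = χ₂ ≫ s.map ((DF r s a).map β) from h₃]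
      rw [Category.assoc, Category.assoc, ← Functor.map_comp, ← Functor.map_comp,
        ← Functor.map_comp, ← Functor.map_comp, ← IsFiltered.coeq_condition]
    have h₅ : gam r s ρ a χ₁ ≫ (DF r s a).map δ = gam r s ρ a χ₂ ≫ (DF r s a).map δ := by
      rw [← gam_comp_hom, ← gam_comp_hom, h₄]
    refine ⟨⟨IsFiltered.coeq α β⟩,
      ⟨gam r s ρ a ψ ≫ (DF r s a).map δ,
        Or.inr ⟨ψ ≫ s.map ((DF r s a).map δ),
          wc_comp_lam r s ρ a hψ (lam_w r s ρ a δ), by rw [gam_comp_hom]⟩⟩, ?_⟩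
    apply Subtype.ext
    show g.1 ≫ gam r s ρ a ψ ≫ (DF r s a).map δ = g'.1 ≫ gam r s ρ a ψ ≫ (DF r s a).map δ
    rw [← Category.assoc, e₁, ← Category.assoc, e₂, h₅]

variable (colimA : Ind A ⥤ A) (adj : colimA ⊣ Ind.yoneda)

/-- The candidate value of the left adjoint at `a`. -/
noncomputable abbrev La : Ind A := colimit (DJ r s ρ a ⋙ Ind.yoneda)

lemma iota_colimAIso_inv {E : Type v} [SmallCategory E] [IsFiltered E] (H : E ⥤ A) (e : E) :
    colimit.ι H e ≫ (colimAIso colimA adj H).inv =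
      inv (adj.counit.app (H.obj e)) ≫ colimA.map (colimit.ι (H ⋙ Ind.yoneda) e) := by
  rw [Iso.comp_inv_eq, Category.assoc, colimAIso_ι, IsIso.inv_hom_id_assoc]

/-- The unit isomorphism. -/
noncomputable def etaIso : a ≅ colimA.obj (La r s ρ a) :=
  (lamColimit r s ρ a).coconePointUniqueUpToIso (colimit.isColimit (DJ r s ρ a)) ≪≫
    (colimAIso colimA adj (DJ r s ρ a)).symm

lemma eta_lam (j : Jc r s ρ a) :
    lam r s ρ a j.i ≫ (etaIso r s ρ a colimA adj).hom =
      inv (adj.counit.app ((DJ r s ρ a).obj j)) ≫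
        colimA.map (colimit.ι (DJ r s ρ a ⋙ Ind.yoneda) j) := by
  have h1 : lam r s ρ a j.i ≫
      ((lamColimit r s ρ a).coconePointUniqueUpToIso (colimit.isColimit (DJ r s ρ a))).hom =
      colimit.ι (DJ r s ρ a) j :=
    (lamColimit r s ρ a).comp_coconePointUniqueUpToIso_hom (colimit.isColimit (DJ r s ρ a)) j
  show lam r s ρ a j.i ≫ (((lamColimit r s ρ a).coconePointUniqueUpToIso
    (colimit.isColimit (DJ r s ρ a))).hom ≫ (colimAIso colimA adj (DJ r s ρ a)).inv) = _
  rw [← Category.assoc, h1, iota_colimAIso_inv]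

lemma inv_eps_nat {b b' : A} (h : b ⟶ b') :
    inv (adj.counit.app b) ≫ colimA.map (Ind.yoneda.map h) = h ≫ inv (adj.counit.app b') := by
  rw [IsIso.inv_comp_eq, ← Category.assoc, IsIso.eq_comp_inv]
  exact adj.counit.naturality h

variable (X : Ind A)

/-- Comparison between the colimit of the presentation of `X` and the value of `colimA`. -/
noncomputable def muX : colimit X.presentation.F ≅ colimA.obj X :=
  (colimAIso colimA adj X.presentation.F).symm ≪≫
    colimA.mapIso (Ind.colimitPresentationCompYoneda X)

lemma eps_mu (kk : X.presentation.I) :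
    inv (adj.counit.app (X.presentation.F.obj kk)) ≫
      colimA.map (colimit.ι (X.presentation.F ⋙ Ind.yoneda) kk ≫
        (Ind.colimitPresentationCompYoneda X).hom) =
      colimit.ι X.presentation.F kk ≫ (muX colimA adj X).hom := by
  rw [muX, Iso.trans_hom, Iso.symm_hom, ← Category.assoc, iota_colimAIso_inv,
    Functor.map_comp, Category.assoc]
  rfl

/-- The cocone over the presentation of `X` with point `X`. -/
noncomputable abbrev mXCocone : Cocone (X.presentation.F ⋙ Ind.yoneda) where
  pt := X
  ι :=
    { app := fun kk => colimit.ι _ kk ≫ (Ind.colimitPresentationCompYoneda X).hom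
      naturality := fun _ _ α => by
        simpa using colimit.w_assoc (X.presentation.F ⋙ Ind.yoneda) α
          (Ind.colimitPresentationCompYoneda X).hom }

noncomputable def mXIsColimit : IsColimit (mXCocone X) :=
  (colimit.isColimit _).ofIsoColimit
    (Cocones.ext (Ind.colimitPresentationCompYoneda X) (fun kk => rfl))

lemma mX_w {b : A} {k k' : X.presentation.I} (α : k ⟶ k') (h : b ⟶ X.presentation.F.obj k) :
    Ind.yoneda.map h ≫ (mXCocone X).ι.app k =
      Ind.yoneda.map (h ≫ X.presentation.F.map α) ≫ (mXCocone X).ι.app k' := by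
  rw [Functor.map_comp, Category.assoc]
  congr 1
  exact ((mXCocone X).w α).symm

/-- The main theorem: the canonical map is a bijection. -/
theorem key_bijective :
    Function.Bijective
      (fun f : (La r s ρ a ⟶ X) => (etaIso r s ρ a colimA adj).hom ≫ colimA.map f) := by
  have sQcolim : IsColimit (s.mapCocone (colimit.cocone X.presentation.F)) :=
    isColimitOfPreserves s (colimit.isColimit _)
  constructor
  · -- injectivity
    intro f f' hff
    have h0 : colimA.map f = colimA.map f' := by
      rwa [Iso.cancel_iso_hom_left] at hff
    apply colimit.hom_ext
    intro j
    obtain ⟨i₂, ψ, hψ⟩ := exists_W r s ρ a j.i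
    have hstep : colimit.ι (DJ r s ρ a ⋙ Ind.yoneda) j =
        Ind.yoneda.map (gam r s ρ a ψ) ≫ colimit.ι (DJ r s ρ a ⋙ Ind.yoneda) ⟨i₂⟩ :=
      (colimit.w (DJ r s ρ a ⋙ Ind.yoneda)
        (⟨gam r s ρ a ψ, Or.inr ⟨ψ, hψ, rfl⟩⟩ : j ⟶ ⟨i₂⟩)).symm
    obtain ⟨k₁, w₁, hw₁⟩ := ind_factor (mXCocone X) (mXIsColimit X)
      (colimit.ι (DJ r s ρ a ⋙ Ind.yoneda) ⟨i₂⟩ ≫ f)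
    obtain ⟨k₂, w₂, hw₂⟩ := ind_factor (mXCocone X) (mXIsColimit X)
      (colimit.ι (DJ r s ρ a ⋙ Ind.yoneda) ⟨i₂⟩ ≫ f')
    obtain ⟨wh₁, rfl⟩ := Ind.yoneda.map_surjective w₁
    obtain ⟨wh₂, rfl⟩ := Ind.yoneda.map_surjective w₂
    have hmx : ∀ kk, (mXCocone X).ι.app kk =
        colimit.ι (X.presentation.F ⋙ Ind.yoneda) kk ≫
          (Ind.colimitPresentationCompYoneda X).hom := fun kk => rfl
    -- the A-level equality
    have hA : wh₁ ≫ colimit.ι X.presentation.F k₁ = wh₂ ≫ colimit.ι X.presentation.F k₂ := by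
      rw [← Iso.cancel_iso_hom_right _ _ (muX colimA adj X)]
      rw [Category.assoc, Category.assoc, ← eps_mu, ← eps_mu]
      rw [← Category.assoc, ← Category.assoc, ← inv_eps_nat, ← inv_eps_nat]
      rw [Category.assoc, Category.assoc, ← Functor.map_comp, ← Functor.map_comp]
      rw [← hmx, ← hmx, hw₁, hw₂]
      rw [Functor.map_comp, Functor.map_comp, h0]
    have hK : (ψ ≫ s.map wh₁) ≫ s.map (colimit.ι X.presentation.F k₁) =
        (ψ ≫ s.map wh₂) ≫ s.map (colimit.ι X.presentation.F k₂) := by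
      rw [Category.assoc, Category.assoc, ← Functor.map_comp, ← Functor.map_comp, hA]
    obtain ⟨k₃, α, β, h₃⟩ := ind_eq (s.mapCocone (colimit.cocone X.presentation.F)) sQcolim
      (ψ ≫ s.map wh₁) (ψ ≫ s.map wh₂) hK
    have harg : ψ ≫ s.map (wh₁ ≫ X.presentation.F.map α) =
        ψ ≫ s.map (wh₂ ≫ X.presentation.F.map β) := by
      rw [Functor.map_comp, Functor.map_comp, ← Category.assoc, ← Category.assoc]
      exact h₃
    have h₅ : gam r s ρ a ψ ≫ wh₁ ≫ X.presentation.F.map α =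
        gam r s ρ a ψ ≫ wh₂ ≫ X.presentation.F.map β := by
      have e₁ := gam_comp r s ρ (χ := ψ) (wh₁ ≫ X.presentation.F.map α)
      have e₂ := gam_comp r s ρ (χ := ψ) (wh₂ ≫ X.presentation.F.map β)
      rw [gam, ← e₁, harg, e₂]
    calc colimit.ι (DJ r s ρ a ⋙ Ind.yoneda) j ≫ f
        = Ind.yoneda.map (gam r s ρ a ψ) ≫ Ind.yoneda.map wh₁ ≫ (mXCocone X).ι.app k₁ := by
          rw [hstep, Category.assoc, hw₁]
      _ = Ind.yoneda.map (gam r s ρ a ψ) ≫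
            Ind.yoneda.map (wh₁ ≫ X.presentation.F.map α) ≫ (mXCocone X).ι.app k₃ := by
          rw [mX_w X α wh₁]
      _ = Ind.yoneda.map (gam r s ρ a ψ) ≫
            Ind.yoneda.map (wh₂ ≫ X.presentation.F.map β) ≫ (mXCocone X).ι.app k₃ := by
          rw [← Functor.map_comp_assoc, h₅, Functor.map_comp_assoc]
      _ = Ind.yoneda.map (gam r s ρ a ψ) ≫ Ind.yoneda.map wh₂ ≫ (mXCocone X).ι.app k₂ := by
          rw [← mX_w X β wh₂]
      _ = colimit.ι (DJ r s ρ a ⋙ Ind.yoneda) j ≫ f' := by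
          rw [hstep, Category.assoc, hw₂]
  · -- surjectivity
    intro g
    have hfac : ∀ j : Jc r s ρ a, ∃ (kk : X.presentation.I)
        (v : (PFY s a).obj j.i ⟶ s.obj (X.presentation.F.obj kk)),
        v ≫ s.map (colimit.ι X.presentation.F kk) =
          colimit.ι (PFY s a) j.i ≫ (pres s a).hom ≫
            s.map (g ≫ (muX colimA adj X).inv) := by
      intro j
      obtain ⟨kk, v, hv⟩ := ind_factor (s.mapCocone (colimit.cocone X.presentation.F)) sQcolim
        (colimit.ι (PFY s a) j.i ≫ (pres s a).hom ≫ s.map (g ≫ (muX colimA adj X).inv))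
      exact ⟨kk, v, hv⟩
    choose kc vc hvc using hfac
    -- well-definedness of the candidate components
    have udef : ∀ (j : Jc r s ρ a) (k₁ k₂ : X.presentation.I)
        (v₁ : (PFY s a).obj j.i ⟶ s.obj (X.presentation.F.obj k₁))
        (v₂ : (PFY s a).obj j.i ⟶ s.obj (X.presentation.F.obj k₂)),
        v₁ ≫ s.map (colimit.ι X.presentation.F k₁) =
          v₂ ≫ s.map (colimit.ι X.presentation.F k₂) →
        Ind.yoneda.map (r.map v₁ ≫ ρ.hom.app _) ≫ (mXCocone X).ι.app k₁ =
          Ind.yoneda.map (r.map v₂ ≫ ρ.hom.app _) ≫ (mXCocone X).ι.app k₂ := by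
      intro j k₁ k₂ v₁ v₂ h
      obtain ⟨k₃, α, β, h₃⟩ := ind_eq (s.mapCocone (colimit.cocone X.presentation.F))
        sQcolim v₁ v₂ h
      have l₁ : (r.map v₁ ≫ ρ.hom.app _) ≫ X.presentation.F.map α =
          r.map (v₁ ≫ s.map (X.presentation.F.map α)) ≫ ρ.hom.app _ :=
        (gam_comp r s ρ v₁ (X.presentation.F.map α)).symm
      have l₂ : (r.map v₂ ≫ ρ.hom.app _) ≫ X.presentation.F.map β =
          r.map (v₂ ≫ s.map (X.presentation.F.map β)) ≫ ρ.hom.app _ :=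
        (gam_comp r s ρ v₂ (X.presentation.F.map β)).symm
      have harg : v₁ ≫ s.map (X.presentation.F.map α) =
          v₂ ≫ s.map (X.presentation.F.map β) := h₃
      calc Ind.yoneda.map (r.map v₁ ≫ ρ.hom.app _) ≫ (mXCocone X).ι.app k₁
          = Ind.yoneda.map ((r.map v₁ ≫ ρ.hom.app _) ≫ X.presentation.F.map α) ≫
              (mXCocone X).ι.app k₃ := mX_w X α _
        _ = Ind.yoneda.map ((r.map v₂ ≫ ρ.hom.app _) ≫ X.presentation.F.map β) ≫
              (mXCocone X).ι.app k₃ := by rw [l₁, l₂, harg]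
        _ = Ind.yoneda.map (r.map v₂ ≫ ρ.hom.app _) ≫ (mXCocone X).ι.app k₂ :=
            (mX_w X β _).symm
    -- key computation relating the chosen factorizations to `lam`
    have lam_fact : ∀ j : Jc r s ρ a,
        (r.map (vc j) ≫ ρ.hom.app _) ≫ colimit.ι X.presentation.F (kc j) =
          lam r s ρ a j.i ≫ g ≫ (muX colimA adj X).inv := by
      intro j
      rw [← gam_comp r s ρ (vc j) (colimit.ι X.presentation.F (kc j)), hvc j, lam]
      simp only [Functor.map_comp, Category.assoc]
      rw [← rho_nat r s ρ, ← rho_nat_assoc r s ρ]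
    -- the candidate morphism
    refine ⟨colimit.desc (DJ r s ρ a ⋙ Ind.yoneda)
      ⟨X, ⟨fun j => Ind.yoneda.map (r.map (vc j) ≫ ρ.hom.app _) ≫ (mXCocone X).ι.app (kc j),
        ?_⟩⟩, ?_⟩
    · -- cocone property
      intro j j' gm
      simp only [Functor.const_obj_obj, Functor.const_obj_map, Category.comp_id]
      have hcomp : (DJ r s ρ a ⋙ Ind.yoneda).map gm = Ind.yoneda.map gm.1 := rfl
      rw [hcomp]
      rcases gm.2 with ⟨α, hα⟩ | ⟨χ, hχ, hg⟩
      · -- structure morphism case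
        have hval : gm.1 ≫ r.map (vc j') ≫ ρ.hom.app _ =
            r.map ((PFY s a).map α ≫ vc j') ≫ ρ.hom.app _ := by
          rw [hα, Functor.map_comp, Category.assoc]
          rfl
        rw [← Category.assoc, ← Functor.map_comp, hval]
        exact udef j (kc j') (kc j) ((PFY s a).map α ≫ vc j') (vc j)
          (by rw [Category.assoc, hvc j', colimit.w_assoc]; exact (hvc j).symm)
      · -- wavy arrow case
        have hval : gm.1 ≫ r.map (vc j') ≫ ρ.hom.app _ =
            r.map (χ ≫ s.map (r.map (vc j') ≫ ρ.hom.app _)) ≫ ρ.hom.app _ := by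
          rw [hg, gam, Category.assoc, gam_comp, Category.assoc]
        rw [← Category.assoc, ← Functor.map_comp, hval]
        refine udef j (kc j') (kc j) (χ ≫ s.map (r.map (vc j') ≫ ρ.hom.app _)) (vc j) ?_
        rw [Category.assoc, ← Functor.map_comp, lam_fact j']
        rw [Functor.map_comp, ← Category.assoc, hχ, Category.assoc]
        exact (hvc j).symm
    · -- the map descends to `g`
      apply (lamColimit r s ρ a).hom_ext
      intro j
      have hlc : (lamCocone r s ρ a).ι.app j = lam r s ρ a j.i := rfl
      rw [hlc, ← Category.assoc, eta_lam r s ρ a colimA adj j, Category.assoc,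
        ← Functor.map_comp, colimit.ι_desc]
      show inv (adj.counit.app ((DJ r s ρ a).obj j)) ≫
        colimA.map (Ind.yoneda.map (r.map (vc j) ≫ ρ.hom.app _) ≫ (mXCocone X).ι.app (kc j)) =
        lam r s ρ a j.i ≫ g
      rw [Functor.map_comp, ← Category.assoc, inv_eps_nat, Category.assoc]
      simp only [Functor.id_obj]
      have : colimA.map ((mXCocone X).ι.app (kc j)) =
          colimA.map (colimit.ι (X.presentation.F ⋙ Ind.yoneda) (kc j) ≫
            (Ind.colimitPresentationCompYoneda X).hom) := rfl
      rw [this, eps_mu colimA adj X (kc j), ← Category.assoc, lam_fact j]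
      simp

end Main


end Stmt16Aux

theorem stmt16 {C : Type v} [SmallCategory C] {A : Type u} [Category.{v} A]
    [HasFilteredColimits A]
    (r : Ind C ⥤ A) (s : A ⥤ Ind C)
    [PreservesFilteredColimits r] [PreservesFilteredColimits s]
    (hrs : Nonempty (s ⋙ r ≅ 𝟭 A))
    (colimA : Ind A ⥤ A) (adj : colimA ⊣ Ind.yoneda) :
    ∃ L : A ⥤ Ind A, Nonempty (L ⊣ colimA) := by
  obtain ⟨ρ⟩ := hrs
  let e : ∀ (aa : A) (X : Ind A), (Stmt16Aux.La r s ρ aa ⟶ X) ≃ (aa ⟶ colimA.obj X) :=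
    fun aa X => Equiv.ofBijective _ (Stmt16Aux.key_bijective r s ρ aa colimA adj X)
  have he : ∀ (aa : A) (X X' : Ind A) (gmap : X ⟶ X') (h : Stmt16Aux.La r s ρ aa ⟶ X),
      e aa X' (h ≫ gmap) = e aa X h ≫ colimA.map gmap := by
    intro aa X X' gmap h
    show (Stmt16Aux.etaIso r s ρ aa colimA adj).hom ≫ colimA.map (h ≫ gmap) =
      ((Stmt16Aux.etaIso r s ρ aa colimA adj).hom ≫ colimA.map h) ≫ colimA.map gmap
    rw [Functor.map_comp, Category.assoc]
  exact ⟨Adjunction.leftAdjointOfEquiv e he, ⟨Adjunction.adjunctionOfEquivLeft e he⟩⟩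
end

section
/- Every finitely accessible category is continuous: if A ≃ Ind(C) for a small category C, then the colimit functor colim : Ind(A) → A has a left adjoint. -/
open CategoryTheory Limits Opposite

universe v u u'

namespace Stmt17

section Compact

variable {D : Type u'} [Category.{v} D]

noncomputable def coyonedaIndYonedaIso (d : D) :
    coyoneda.obj (op (Ind.yoneda.obj d)) ≅
      Ind.inclusion D ⋙ (evaluation Dᵒᵖ (Type v)).obj (op d) :=
  NatIso.ofComponents
    (fun M => Equiv.toIso <|
      ((Ind.inclusion.fullyFaithful (C := D)).homEquiv).trans <|
        (Iso.homCongr (Ind.yonedaCompInclusion.app d) (Iso.refl _)).trans yonedaEquiv)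
    (fun {M N} g => by
      ext f
      simp [Functor.FullyFaithful.homEquiv, yonedaEquiv_comp])

noncomputable instance indCompact (d : D) {J : Type v} [SmallCategory J] [IsFiltered J] :
    PreservesColimitsOfShape J (coyoneda.obj (op (Ind.yoneda.obj d))) :=
  preservesColimitsOfShape_of_natIso (coyonedaIndYonedaIso d).symm

end Compact

section Main

variable {C : Type v} [SmallCategory C] {A : Type u} [Category.{v} A]

/-- Hom out of `e.inverse.obj (Ind.yoneda.obj c)` is computed in `Ind C`. -/
noncomputable def coyonedaEquivIso (e : A ≌ Ind C) (c : C) :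
    coyoneda.obj (op (e.inverse.obj (Ind.yoneda.obj c))) ≅
      e.functor ⋙ coyoneda.obj (op (Ind.yoneda.obj c)) :=
  NatIso.ofComponents
    (fun Z => Equiv.toIso (e.symm.toAdjunction.homEquiv _ _))
    (fun {Z W} g => by
      ext f
      simpa using (e.symm.toAdjunction.homEquiv_naturality_right f g))

noncomputable def aCompact (e : A ≌ Ind C) (c : C) {J : Type v} [SmallCategory J]
    [IsFiltered J] :
    PreservesColimitsOfShape J (coyoneda.obj (op (e.inverse.obj (Ind.yoneda.obj c)))) :=
  preservesColimitsOfShape_of_natIso (coyonedaEquivIso e c).symm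

variable (e : A ≌ Ind C) (cA : Ind A ⥤ A) (adj : cA ⊣ Ind.yoneda)

lemma counit_inv_nat {b b' : A} (g : b ⟶ b') :
    g ≫ inv (adj.counit.app b') = inv (adj.counit.app b) ≫ cA.map (Ind.yoneda.map g) := by
  rw [IsIso.comp_inv_eq, Category.assoc, IsIso.eq_inv_comp]
  simpa using (adj.counit.naturality g).symm

lemma phi_equivariant {b b' : A} (g : b ⟶ b') {Y : Ind A} (h : Ind.yoneda.obj b' ⟶ Y) :
    inv (adj.counit.app b) ≫ cA.map (Ind.yoneda.map g ≫ h)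
      = g ≫ inv (adj.counit.app b') ≫ cA.map h := by
  rw [Functor.map_comp, ← Category.assoc, ← Category.assoc, counit_inv_nat cA adj g]

lemma key_colimit {J : Type v} [SmallCategory J] [IsFiltered J] (G : J ⥤ A) (c : C) :
    Function.Bijective
      (fun f : Ind.yoneda.obj (e.inverse.obj (Ind.yoneda.obj c)) ⟶ colimit (G ⋙ Ind.yoneda) =>
        inv (adj.counit.app (e.inverse.obj (Ind.yoneda.obj c))) ≫ cA.map f) := by
  haveI : PreservesColimitsOfSize.{v, v} cA := adj.leftAdjoint_preservesColimits
  haveI := aCompact e c (J := J)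
  set b := e.inverse.obj (Ind.yoneda.obj c) with hb
  -- the colimit cocone, seen through the compact object `Ind.yoneda.obj b`
  have hL : IsColimit ((coyoneda.obj (op (Ind.yoneda.obj b))).mapCocone
      (colimit.cocone (G ⋙ Ind.yoneda))) :=
    isColimitOfPreserves _ (colimit.isColimit _)
  -- cocone on `G` with point `cA.obj (colimit (G ⋙ Ind.yoneda))`
  let δ : (G ⋙ Ind.yoneda) ⋙ cA ≅ G :=
    NatIso.ofComponents (fun j => asIso (adj.counit.app (G.obj j)))
      (fun {j j'} φ => by simpa using adj.counit.naturality (G.map φ))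
  let s : Cocone G :=
    (Cocone.precompose δ.inv).obj (cA.mapCocone (colimit.cocone (G ⋙ Ind.yoneda)))
  have hs : IsColimit s :=
    (IsColimit.precomposeInvEquiv δ _).symm (isColimitOfPreserves cA (colimit.isColimit _))
  have hs' : IsColimit ((coyoneda.obj (op b)).mapCocone s) := isColimitOfPreserves _ hs
  let ψ : (G ⋙ Ind.yoneda) ⋙ coyoneda.obj (op (Ind.yoneda.obj b)) ≅
      G ⋙ coyoneda.obj (op b) :=
    NatIso.ofComponents
      (fun j => Equiv.toIso (Ind.yoneda.fullyFaithful.homEquiv (X := b) (Y := G.obj j)).symm)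
      (fun {j j'} φ => by
        ext f
        apply Ind.yoneda.fullyFaithful.map_injective
        simp [Functor.FullyFaithful.homEquiv])
  let s' := (Cocone.precompose ψ.hom).obj ((coyoneda.obj (op b)).mapCocone s)
  have hs'' : IsColimit s' := (IsColimit.precomposeHomEquiv ψ _).symm hs'
  have hΦ : (fun f : Ind.yoneda.obj b ⟶ colimit (G ⋙ Ind.yoneda) =>
        inv (adj.counit.app b) ≫ cA.map f)
      = (IsColimit.coconePointUniqueUpToIso hL hs'').hom := by
    suffices h : TypeCat.ofHom (fun f : Ind.yoneda.obj b ⟶ colimit (G ⋙ Ind.yoneda) =>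
        inv (adj.counit.app b) ≫ cA.map f) = (IsColimit.coconePointUniqueUpToIso hL hs'').hom by
      rw [← h]; rfl
    apply hL.hom_ext
    intro j
    rw [IsColimit.comp_coconePointUniqueUpToIso_hom]
    ext f
    show inv (adj.counit.app b) ≫ cA.map (f ≫ colimit.ι (G ⋙ Ind.yoneda) j) = _
    have hf : f = Ind.yoneda.map (Ind.yoneda.fullyFaithful.homEquiv.symm f) := by
      simp [Functor.FullyFaithful.homEquiv]
    conv_lhs => rw [hf]
    rw [phi_equivariant cA adj]
    show _ = (ψ.hom.app j ≫ ((coyoneda.obj (op b)).mapCocone s).ι.app j) f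
    simp only [Functor.mapCocone_ι_app, types_comp_apply]
    simp [ψ, s, δ, NatIso.ofComponents_inv_app, asIso_inv]
    rfl
  rw [hΦ]
  exact (isIso_iff_bijective _).mp inferInstance

lemma key (c : C) (Y : Ind A) :
    Function.Bijective
      (fun f : Ind.yoneda.obj (e.inverse.obj (Ind.yoneda.obj c)) ⟶ Y =>
        inv (adj.counit.app (e.inverse.obj (Ind.yoneda.obj c))) ≫ cA.map f) := by
  let w : colimit (Y.presentation.F ⋙ Ind.yoneda) ≅ Y := Ind.colimitPresentationCompYoneda Y
  have h0 := key_colimit e cA adj Y.presentation.F c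
  have hdec : (fun f : Ind.yoneda.obj (e.inverse.obj (Ind.yoneda.obj c)) ⟶ Y =>
        inv (adj.counit.app (e.inverse.obj (Ind.yoneda.obj c))) ≫ cA.map f)
      = (fun g => g ≫ cA.map w.hom) ∘
        (fun f : Ind.yoneda.obj (e.inverse.obj (Ind.yoneda.obj c)) ⟶
            colimit (Y.presentation.F ⋙ Ind.yoneda) =>
          inv (adj.counit.app (e.inverse.obj (Ind.yoneda.obj c))) ≫ cA.map f) ∘
        (fun f => f ≫ w.inv) := by
    funext f
    simp [← Functor.map_comp]
  rw [hdec]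
  have h1 : Function.Bijective (fun g : e.inverse.obj (Ind.yoneda.obj c) ⟶
      cA.obj (colimit (Y.presentation.F ⋙ Ind.yoneda)) => g ≫ cA.map w.hom) := by
    constructor
    · intro x y h
      simpa [← Functor.map_comp] using congrArg (· ≫ cA.map w.inv) h
    · intro g
      exact ⟨g ≫ cA.map w.inv, by simp [← Functor.map_comp]⟩
  have h2 : Function.Bijective
      (fun f : Ind.yoneda.obj (e.inverse.obj (Ind.yoneda.obj c)) ⟶ Y => f ≫ w.inv) := by
    constructor
    · intro x y h
      simpa using congrArg (· ≫ w.hom) h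
    · intro f
      exact ⟨f ≫ w.hom, by simp⟩
  exact h1.comp (h0.comp h2)

noncomputable def KF (X : A) : (e.functor.obj X).presentation.I ⥤ A :=
  (e.functor.obj X).presentation.F ⋙ Ind.yoneda ⋙ e.inverse

noncomputable def LObj (X : A) : Ind A := colimit (KF e X ⋙ Ind.yoneda)

noncomputable def tX (X : A) : Cocone (KF e X) :=
  e.inverse.mapCocone (colimit.cocone ((e.functor.obj X).presentation.F ⋙ Ind.yoneda))

noncomputable def htX (X : A) : IsColimit (tX e X) :=
  isColimitOfPreserves e.inverse (colimit.isColimit _)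

noncomputable def xIso (X : A) : X ≅ (tX e X).pt :=
  e.unitIso.app X ≪≫ e.inverse.mapIso (Ind.colimitPresentationCompYoneda (e.functor.obj X)).symm

noncomputable def sig (c : C) (Y : Ind A) :
    (Ind.yoneda.obj (e.inverse.obj (Ind.yoneda.obj c)) ⟶ Y) ≃
      (e.inverse.obj (Ind.yoneda.obj c) ⟶ cA.obj Y) :=
  Equiv.ofBijective _ (key e cA adj c Y)

@[simp] lemma sig_apply (c : C) (Y : Ind A)
    (f : Ind.yoneda.obj (e.inverse.obj (Ind.yoneda.obj c)) ⟶ Y) :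
    sig e cA adj c Y f = inv (adj.counit.app _) ≫ cA.map f := rfl

noncomputable def eqv1 (X : A) (Y : Ind A) :
    (LObj e X ⟶ Y) ≃ ((KF e X ⋙ Ind.yoneda) ⟶ (Functor.const _).obj Y) where
  toFun f :=
    { app := fun j => colimit.ι (KF e X ⋙ Ind.yoneda) j ≫ f
      naturality := fun j j' φ => by
        dsimp only [Functor.const_obj_map]
        erw [← Category.assoc, colimit.w]
        exact (Category.comp_id _).symm }
  invFun η := colimit.desc _ ⟨Y, η⟩
  left_inv f := colimit.hom_ext (fun j => by simp)
  right_inv η := by ext j; simp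

noncomputable def eqv2 (X : A) (Y : Ind A) :
    ((KF e X ⋙ Ind.yoneda) ⟶ (Functor.const _).obj Y) ≃
      (KF e X ⟶ (Functor.const _).obj (cA.obj Y)) where
  toFun η :=
    { app := fun j => sig e cA adj _ Y (η.app j)
      naturality := fun j j' φ => by
        have hη := η.naturality φ
        simp only [Functor.const_obj_obj, Functor.const_obj_map, Category.comp_id,
          Functor.comp_map] at hη ⊢
        erw [sig_apply, sig_apply, ← hη, phi_equivariant cA adj]
        exact (Category.comp_id _).symm }
  invFun θ :=
    { app := fun j => (sig e cA adj _ Y).symm (θ.app j)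
      naturality := fun j j' φ => by
        have hθ := θ.naturality φ
        simp only [Functor.const_obj_obj, Functor.const_obj_map, Category.comp_id,
          Functor.comp_map] at hθ ⊢
        apply (sig e cA adj _ Y).injective
        erw [sig_apply, phi_equivariant cA adj]
        show (KF e X).map φ ≫ (sig e cA adj ((e.functor.obj X).presentation.F.obj j') Y)
          ((sig e cA adj _ Y).symm (θ.app j')) = _
        erw [Equiv.apply_symm_apply, hθ, Category.comp_id, Equiv.apply_symm_apply] }
  left_inv η := by
    ext j
    exact (sig e cA adj _ Y).symm_apply_apply (η.app j)
  right_inv θ := by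
    ext j
    exact (sig e cA adj _ Y).apply_symm_apply (θ.app j)

noncomputable def eqv3 (X : A) (Y : Ind A) :
    (KF e X ⟶ (Functor.const _).obj (cA.obj Y)) ≃ ((tX e X).pt ⟶ cA.obj Y) where
  toFun θ := (htX e X).desc ⟨cA.obj Y, θ⟩
  invFun f :=
    { app := fun j => (tX e X).ι.app j ≫ f
      naturality := fun j j' φ => by
        rw [← Category.assoc, (tX e X).w φ]
        simp }
  left_inv θ := by ext j; exact (htX e X).fac _ j
  right_inv f := (htX e X).hom_ext (fun j => by rw [(htX e X).fac])

noncomputable def eqv (X : A) (Y : Ind A) : (LObj e X ⟶ Y) ≃ (X ⟶ cA.obj Y) :=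
  ((eqv1 e X Y).trans ((eqv2 e cA adj X Y).trans (eqv3 e cA X Y))).trans
    (Iso.homCongr (xIso e X).symm (Iso.refl _))

lemma he (X : A) (Y Y' : Ind A) (g : Y ⟶ Y') (h : LObj e X ⟶ Y) :
    eqv e cA adj X Y' (h ≫ g) = eqv e cA adj X Y h ≫ cA.map g := by
  simp only [eqv, eqv1, eqv2, eqv3, Equiv.trans_apply, Equiv.coe_fn_mk, Iso.homCongr_apply,
    Iso.symm_inv, Iso.refl_hom, Category.comp_id]
  rw [Category.assoc]
  congr 1
  apply (htX e X).hom_ext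
  intro j
  rw [(htX e X).fac, ← Category.assoc, (htX e X).fac]
  dsimp
  show inv (adj.counit.app _) ≫ cA.map (colimit.ι (KF e X ⋙ Ind.yoneda) j ≫ h ≫ g) =
    (inv (adj.counit.app _) ≫ cA.map (colimit.ι (KF e X ⋙ Ind.yoneda) j ≫ h)) ≫ cA.map g
  simp [Category.assoc]
  rw [← cA.map_comp, ← cA.map_comp]
  exact congrArg cA.map (Category.assoc _ _ _).symm

end Main

end Stmt17

theorem stmt17 {C : Type v} [SmallCategory C] {A : Type u} [Category.{v} A]
    (e : A ≌ Ind C)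
    (colimA : Ind A ⥤ A) (adj : colimA ⊣ Ind.yoneda) :
    ∃ L : A ⥤ Ind A, Nonempty (L ⊣ colimA) := by
  exact ⟨Adjunction.leftAdjointOfEquiv (fun X Y => Stmt17.eqv e colimA adj X Y)
      (fun X Y Y' g h => Stmt17.he e colimA adj X Y Y' g h),
    ⟨Adjunction.adjunctionOfEquivLeft _ _⟩⟩
end
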